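/- Let F(x̃,ỹ) = ⋀_k (a_k ∨ b_k ∨ c_k) be a 3-CNF formula in Boolean variables x₁,…,x_r, y₁,…,y_p. Then F(x̃,ỹ) holds if and only if for all z in a suitable finite range, a conjunction over k of disjunctions Ψ_k of linear-inequality conditions on the integers x, y encoding x̃, ỹ holds; concretely, each literal x_i is equivalent to the condition that ⌊x/2^{i−1}⌋ is odd, ¬x_i to it being even, and the clause (a_k ∨ b_k ∨ c_k) is equivalent to ¬(¬a_k ∧ ¬b_k ∧ ¬c_k), where the triple conjunction is expressed by an existential over z ∈ [0,2^q)³ of a system of 6 linear inequalities. -/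

import Mathlib

/-- `digitCond w i b z` says that `2z + b` (with `b` read as `0` or `1`) lies in the
interval `(w/2^i − 1, w/2^i]`, i.e. that `⌊w/2^i⌋ = 2z + b`, with denominators cleared. -/
def digitCond (w i : ℕ) (b : Bool) (z : ℕ) : Prop :=
  (w : ℤ) - 2 ^ i < 2 ^ i * (2 * (z : ℤ) + if b then 1 else 0) ∧
    2 ^ i * (2 * (z : ℤ) + if b then 1 else 0) ≤ (w : ℤ)

/-- A literal is a pair of a polarity and a variable index among `x₁,…,x_r,y₁,…,y_p`.
`litHolds r x y l` says the literal holds for the assignment given by the binary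
digits of `x` and `y`. -/
def litHolds (r x y : ℕ) (l : Bool × ℕ) : Prop :=
  (if l.2 < r then x / 2 ^ l.2 % 2 else y / 2 ^ (l.2 - r) % 2) = if l.1 then 1 else 0

/-- The negation of a literal, encoded by the inequality system `digitCond` with
auxiliary variable `z`. -/
def negLitCond (r x y : ℕ) (l : Bool × ℕ) (z : ℕ) : Prop :=
  if l.2 < r then digitCond x l.2 (!l.1) z else digitCond y (l.2 - r) (!l.1) z

lemma div_eq_iff' (w c m : ℕ) (hc : 0 < c) : w / c = m ↔ m * c ≤ w ∧ w < (m+1) * c := by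
  rw [show (w / c = m ↔ m ≤ w/c ∧ w/c < m+1) from by omega,
    Nat.le_div_iff_mul_le hc, Nat.div_lt_iff_lt_mul hc]

lemma digit_iff (w i z : ℕ) (b : Bool) :
    digitCond w i b z ↔ w / 2^i = 2*z + (if b then 1 else 0) := by
  rw [digitCond, div_eq_iff' _ _ _ (show 0 < 2^i by positivity)]
  cases b <;> simp <;> constructor <;> rintro ⟨h1, h2⟩ <;>
    constructor <;> zify at * <;> nlinarith [h1, h2]

lemma exists_digit (q w i : ℕ) (hw : w < 2^q) (b : Bool) :
    (∃ z, z < 2^q ∧ digitCond w i b z) ↔ w / 2^i % 2 = (if b then 1 else 0) := by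
  constructor
  · rintro ⟨z, _, hz⟩
    rw [digit_iff] at hz
    cases b <;> simp at hz ⊢ <;> omega
  · intro h
    refine ⟨w / 2^i / 2, ?_, ?_⟩
    · have h1 : w / 2^i ≤ w := Nat.div_le_self _ _
      have h2 : w / 2^i / 2 ≤ w / 2^i := Nat.div_le_self _ _
      omega
    · rw [digit_iff]; omega

lemma negLit_iff (r p x y : ℕ) (hx : x < 2^r) (hy : y < 2^p) (l : Bool × ℕ) :
    (∃ z, z < 2^(max r p) ∧ negLitCond r x y l z) ↔ ¬ litHolds r x y l := by
  have hxq : x < 2^(max r p) := lt_of_lt_of_le hx (Nat.pow_le_pow_right (by norm_num) (le_max_left r p))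
  have hyq : y < 2^(max r p) := lt_of_lt_of_le hy (Nat.pow_le_pow_right (by norm_num) (le_max_right r p))
  unfold negLitCond litHolds
  split
  · rw [exists_digit _ _ _ hxq]
    cases l.1 <;> simp
  · rw [exists_digit _ _ _ hyq]
    cases l.1 <;> simp

theorem threeCNF_forall_encoding (r p M : ℕ) (L : Fin M → Fin 3 → Bool × ℕ)
    (hL : ∀ k t, (L k t).2 < r + p)
    (x y : ℕ) (hx : x < 2 ^ r) (hy : y < 2 ^ p) :
    (∀ k : Fin M, ∃ t : Fin 3, litHolds r x y (L k t)) ↔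
    (∀ k : Fin M, ∀ z : Fin 3 → ℕ, (∀ t, z t < 2 ^ max r p) →
      ¬ (negLitCond r x y (L k 0) (z 0) ∧ negLitCond r x y (L k 1) (z 1) ∧
          negLitCond r x y (L k 2) (z 2))) := by
  constructor
  · rintro h k z hz ⟨h0, h1, h2⟩
    obtain ⟨t, ht⟩ := h k
    have : ¬ litHolds r x y (L k t) := by
      fin_cases t
      · exact (negLit_iff r p x y hx hy _).mp ⟨z 0, hz 0, h0⟩
      · exact (negLit_iff r p x y hx hy _).mp ⟨z 1, hz 1, h1⟩
      · exact (negLit_iff r p x y hx hy _).mp ⟨z 2, hz 2, h2⟩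
    exact this ht
  · intro h k
    by_contra hc
    push_neg at hc
    obtain ⟨z0, hz0, hc0⟩ := (negLit_iff r p x y hx hy (L k 0)).mpr (hc 0)
    obtain ⟨z1, hz1, hc1⟩ := (negLit_iff r p x y hx hy (L k 1)).mpr (hc 1)
    obtain ⟨z2, hz2, hc2⟩ := (negLit_iff r p x y hx hy (L k 2)).mpr (hc 2)
    exact h k ![z0, z1, z2] (by intro t; fin_cases t <;> simpa) ⟨hc0, hc1, hc2⟩
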